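/- Let H be a group with subgroups C_1,...,C_s, and let PMCG^∂(H) be the quotient of Aut^∂(H) by the normal subgroup I = {(τ_h; h,...,h) : h ∈ H}. Then the map sending the class of (α; a_1, a_2,...,a_s) with a_1 = 1 to the pair ((a_2^{-1},...,a_s^{-1}), α) defines an injective group homomorphism from PMCG^∂(H) into the semidirect product H^{s-1} ⋊ Aut(H), where Aut(H) acts diagonally on H^{s-1}. -/

import Mathlib

variable (H : Type*) [Group H]

def autPi (s : ℕ) : MulAut H →* MulAut (Fin s → H) where
  toFun α := MulEquiv.piCongrRight fun _ => α
  map_one' := rfl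
  map_mul' _ _ := rfl

abbrev SDProd (s : ℕ) := SemidirectProduct (Fin s → H) (MulAut H) (autPi H s)

variable {H}

def AutBd {s : ℕ} (C : Fin s → Subgroup H) : Subgroup (SDProd H s) where
  carrier := {x | ∀ i, ∀ c ∈ C i, x.right c = (x.left i)⁻¹ * c * x.left i}
  one_mem' := by intro i c hc; simp
  mul_mem' := by
    intro x y hx hy i c hc
    simp only [SemidirectProduct.mul_right, SemidirectProduct.mul_left, Pi.mul_apply]
    have h1 : (x.right * y.right) c = x.right (y.right c) := rfl
    have h2 : (autPi H _ x.right y.left) i = x.right (y.left i) := rfl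
    rw [h1, h2, hy i c hc, map_mul, map_mul, map_inv, hx i c hc]
    group
  inv_mem' := by
    intro x hx i c hc
    have h3 : (x.right⁻¹ (x.left i))⁻¹ * x.right⁻¹ c * x.right⁻¹ (x.left i) = c := by
      have h4 : (x.right⁻¹ : MulAut H) ((x.left i)⁻¹ * c * x.left i) = c := by
        rw [← hx i c hc]; simp
      simpa only [map_mul, map_inv] using h4
    have h2 : (autPi H _ x.right⁻¹ x.left⁻¹) i = x.right⁻¹ ((x.left i)⁻¹) := rfl
    simp only [SemidirectProduct.inv_right, SemidirectProduct.inv_left, Pi.inv_apply]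
    rw [h2, map_inv, inv_inv]
    calc (x.right⁻¹ : MulAut H) c
        = x.right⁻¹ (x.left i) *
            ((x.right⁻¹ (x.left i))⁻¹ * x.right⁻¹ c * x.right⁻¹ (x.left i)) *
            (x.right⁻¹ (x.left i))⁻¹ := by group
      _ = x.right⁻¹ (x.left i) * c * (x.right⁻¹ (x.left i))⁻¹ := by rw [h3]

/-- `PMCG^∂(H)`, the quotient of `Aut^∂(H)` by the normal subgroup
`I = {(τ_h; h,…,h) : h ∈ H}`, embeds into `H^(s-1) ⋊ Aut(H)`: there is a homomorphism
`f : Aut^∂(H) → H^(s-1) ⋊ Aut(H)` whose kernel is exactly `I` (so the induced map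
on the quotient `PMCG^∂(H)` is an injective homomorphism), sending the unique
representative `(α; 1, a₂, …, aₛ)` of a class to `((a₂⁻¹, …, aₛ⁻¹), α)`.
Here the number of subgroups is `s + 1 ≥ 1`, and in the chosen realization of
`Aut^∂(H)` inside `H^(s+1) ⋊ Aut(H)` the tuple `(α; a₀, …, aₛ)` corresponds to the
element with `left i = aᵢ⁻¹` and `right = α`. -/
theorem stmt5 {s : ℕ} (C : Fin (s + 1) → Subgroup H) :
    ∃ f : AutBd C →* SDProd H s,
      (∀ x : AutBd C,
          (f x = 1 ↔ ∃ h : H,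
            (x : SDProd H (s + 1)) = ⟨fun _ => h⁻¹, MulAut.conj h⟩)) ∧
      ∀ x : AutBd C, (x : SDProd H (s + 1)).left 0 = 1 →
        f x = ⟨fun j => (x : SDProd H (s + 1)).left j.succ,
               (x : SDProd H (s + 1)).right⟩ := by
  have Ext : ∀ a b : SDProd H s, a.left = b.left → a.right = b.right → a = b := by
    rintro ⟨l, r⟩ ⟨l', r'⟩ h1 h2; simp_all
  refine ⟨{ toFun := fun x =>
              ⟨fun j => (x : SDProd H (s + 1)).left j.succ *
                  ((x : SDProd H (s + 1)).left 0)⁻¹,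
               MulAut.conj ((x : SDProd H (s + 1)).left 0) *
                  (x : SDProd H (s + 1)).right⟩
            map_one' := ?_
            map_mul' := ?_ }, ?_, ?_⟩
  · refine Ext _ _ (funext fun j => ?_) ?_ <;> simp
  · intro x y
    refine Ext _ _ (funext fun j => ?_) ?_
    · show (x * y : AutBd C).val.left j.succ * _ = _
      simp only [Subgroup.coe_mul, SemidirectProduct.mul_left, Pi.mul_apply,
        SemidirectProduct.mul_right]
      show _ = _ * (MulAut.conj ((x : SDProd H (s + 1)).left 0))
        ((x : SDProd H (s + 1)).right ((y : SDProd H (s + 1)).left j.succ *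
          ((y : SDProd H (s + 1)).left 0)⁻¹))
      have h1 : ∀ i : Fin (s+1), (autPi H (s+1) (x : SDProd H (s + 1)).right
          (y : SDProd H (s + 1)).left) i =
          (x : SDProd H (s + 1)).right ((y : SDProd H (s + 1)).left i) := fun _ => rfl
      simp only [h1, MulAut.conj_apply, map_mul, map_inv, mul_inv_rev]
      group
    · show MulAut.conj ((x * y : AutBd C).val.left 0) * (x * y : AutBd C).val.right = _
      simp only [Subgroup.coe_mul, SemidirectProduct.mul_left, Pi.mul_apply,
        SemidirectProduct.mul_right]
      have h1 : (autPi H (s+1) (x : SDProd H (s + 1)).right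
          (y : SDProd H (s + 1)).left) 0 =
          (x : SDProd H (s + 1)).right ((y : SDProd H (s + 1)).left 0) := rfl
      rw [h1, map_mul]
      ext c
      simp only [MulAut.conj_apply, MulAut.mul_apply, map_mul, map_inv]
  · intro x
    constructor
    · intro hx
      refine ⟨((x : SDProd H (s + 1)).left 0)⁻¹, ?_⟩
      have hl := congrArg SemidirectProduct.left hx
      have hr := congrArg SemidirectProduct.right hx
      simp only [SemidirectProduct.one_left, SemidirectProduct.one_right] at hl hr
      refine SemidirectProduct.ext (funext fun i => ?_) ?_
      · show (x : SDProd H (s + 1)).left i = _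
        rw [inv_inv]
        rcases Fin.eq_zero_or_eq_succ i with h | ⟨j, rfl⟩
        · rw [h]
        · have this : (x : SDProd H (s + 1)).left j.succ *
              ((x : SDProd H (s + 1)).left 0)⁻¹ = 1 := by
            have h5 : ((x : SDProd H (s + 1)).left j.succ *
                ((x : SDProd H (s + 1)).left 0)⁻¹) = (fun j =>
                (x : SDProd H (s + 1)).left j.succ *
                ((x : SDProd H (s + 1)).left 0)⁻¹) j := rfl
            rw [h5, show (fun j => (x : SDProd H (s + 1)).left j.succ *
                ((x : SDProd H (s + 1)).left 0)⁻¹) = (1 : Fin s → H) from hl]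
            rfl
          calc (x : SDProd H (s + 1)).left j.succ
              = ((x : SDProd H (s + 1)).left j.succ *
                  ((x : SDProd H (s + 1)).left 0)⁻¹) *
                  (x : SDProd H (s + 1)).left 0 := by group
            _ = _ := by rw [this, one_mul]
      · show (x : SDProd H (s + 1)).right = _
        have : (x : SDProd H (s + 1)).right =
            (MulAut.conj ((x : SDProd H (s + 1)).left 0))⁻¹ := by
          have h6 : MulAut.conj ((x : SDProd H (s + 1)).left 0) *
              (x : SDProd H (s + 1)).right = 1 := hr
          exact (inv_eq_of_mul_eq_one_right h6).symm
        rw [this, ← map_inv]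
    · rintro ⟨h, hx⟩
      refine Ext _ _ (funext fun j => ?_) ?_
      · show (x : SDProd H (s + 1)).left j.succ *
            ((x : SDProd H (s + 1)).left 0)⁻¹ = (1 : Fin s → H) j
        rw [hx]; simp
      · show MulAut.conj ((x : SDProd H (s + 1)).left 0) *
            (x : SDProd H (s + 1)).right = 1
        rw [hx]
        show MulAut.conj h⁻¹ * MulAut.conj h = 1
        rw [← map_mul]; simp
  · intro x hx
    refine Ext _ _ (funext fun j => ?_) ?_
    · show (x : SDProd H (s + 1)).left j.succ *
          ((x : SDProd H (s + 1)).left 0)⁻¹ = _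
      rw [hx]; simp
    · show MulAut.conj ((x : SDProd H (s + 1)).left 0) *
          (x : SDProd H (s + 1)).right = _
      rw [hx]; simp
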